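/- Let J be the ideal of the polynomial ring ℤ[x] generated by 2(2x−1) and x(2x−1). Then the quotient ring ℤ[x]/J is isomorphic as a unital ring to the direct product ℤ[1/2] × ℤ/2ℤ, where ℤ[1/2] is the subring of ℚ generated by 1/2. -/

import Mathlib

open Polynomial

noncomputable section StmtAux

abbrev Zhalf : Subring ℚ := Subring.closure {(1 / 2 : ℚ)}

def hHalf : Zhalf := ⟨1 / 2, Subring.subset_closure rfl⟩

def vv : Zhalf × ZMod 2 := (hHalf, 0)

def φ : Polynomial ℤ →+* (Zhalf × ZMod 2) := (aeval vv).toRingHom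

lemma φ_apply (p : Polynomial ℤ) : φ p = aeval vv p := rfl

lemma prim : (2 * X - 1 : Polynomial ℤ).IsPrimitive := by
  intro r hr
  rw [C_dvd_iff_dvd_coeff] at hr
  have h0 := hr 0
  simp at h0
  exact isUnit_of_dvd_one h0

lemma map_two_X_sub_one :
    (2 * X - 1 : Polynomial ℤ).map (Int.castRingHom ℚ) =
      C 2 * (X - C (1 / 2 : ℚ)) := by
  have h : (C (2 : ℚ)) * (X - C (1 / 2 : ℚ)) = 2 * X - 1 := by
    rw [mul_sub, ← C_mul]
    norm_num
    exact map_ofNat C 2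
  rw [h]
  simp [Polynomial.map_sub, Polynomial.map_mul]

lemma dvd_of_root (q : Polynomial ℤ) (hq : aeval (1 / 2 : ℚ) q = 0) :
    (2 * X - 1 : Polynomial ℤ) ∣ q := by
  rcases eq_or_ne q 0 with rfl | hq0
  · exact dvd_zero _
  have hprim := q.isPrimitive_primPart
  have hc : q = C q.content * q.primPart := q.eq_C_content_mul_primPart
  have hcont : (q.content : ℚ) ≠ 0 := by
    exact_mod_cast fun h => hq0 (content_eq_zero_iff.mp (by exact_mod_cast h))
  have hroot : aeval (1 / 2 : ℚ) q.primPart = 0 := by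
    have h := hq
    rw [hc] at h
    simpa [hcont] using h
  have hdvdQ : (X - C (1 / 2 : ℚ)) ∣ q.primPart.map (Int.castRingHom ℚ) := by
    rw [dvd_iff_isRoot]
    simpa [IsRoot, eval_map, ← aeval_def] using
      (show eval₂ (Int.castRingHom ℚ) (1 / 2 : ℚ) q.primPart = 0 from hroot)
  have hunit : IsUnit (C (2 : ℚ) : Polynomial ℚ) := isUnit_C.mpr (by norm_num)
  obtain ⟨u, hu⟩ := hunit
  have hdvdQ' : (2 * X - 1 : Polynomial ℤ).map (Int.castRingHom ℚ) ∣
      q.primPart.map (Int.castRingHom ℚ) := by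
    rw [map_two_X_sub_one, ← hu, Units.mul_left_dvd]
    exact hdvdQ
  have hdvd : (2 * X - 1 : Polynomial ℤ) ∣ q.primPart :=
    (Polynomial.IsPrimitive.Int.dvd_iff_map_cast_dvd_map_cast _ _ prim).mpr hdvdQ'
  exact hdvd.trans (q.primPart_dvd)

lemma fst_φ (p : Polynomial ℤ) : (φ p).1 = aeval hHalf p :=
  (Polynomial.aeval_algHom_apply (AlgHom.fst ℤ Zhalf (ZMod 2)) vv p).symm

lemma snd_φ (p : Polynomial ℤ) : (φ p).2 = aeval (0 : ZMod 2) p :=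
  (Polynomial.aeval_algHom_apply (AlgHom.snd ℤ Zhalf (ZMod 2)) vv p).symm

lemma val_aeval (p : Polynomial ℤ) :
    ((aeval hHalf p : Zhalf) : ℚ) = aeval (1 / 2 : ℚ) p :=
  (Polynomial.aeval_algHom_apply (Zhalf.subtype.toIntAlgHom) hHalf p).symm

lemma φ_eq {q : Polynomial ℤ} {a : ℚ} (ha : a ∈ Zhalf) {b : ZMod 2}
    (h1 : aeval (1 / 2 : ℚ) q = a) (h2 : aeval (0 : ZMod 2) q = b) :
    φ q = ((⟨a, ha⟩ : Zhalf), b) := by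
  refine Prod.ext (Subtype.ext ?_) ?_
  · show (((φ q).1 : Zhalf) : ℚ) = a
    rw [fst_φ, val_aeval, h1]
  · rw [snd_φ, h2]

lemma φ_eq_zero {q : Polynomial ℤ} (h1 : aeval (1 / 2 : ℚ) q = 0)
    (h2 : aeval (0 : ZMod 2) q = 0) : φ q = 0 :=
  φ_eq (zero_mem _) h1 h2

lemma ker_φ : RingHom.ker φ = Ideal.span {2 * (2 * X - 1), X * (2 * X - 1)} := by
  apply le_antisymm
  · intro p hp
    rw [RingHom.mem_ker] at hp
    have h1 : aeval (1 / 2 : ℚ) p = 0 := by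
      rw [← val_aeval, ← fst_φ, hp]; rfl
    have h2 : aeval (0 : ZMod 2) p = 0 := by rw [← snd_φ, hp]; rfl
    obtain ⟨g, hg⟩ := dvd_of_root p h1
    have hcoeff : ((p.coeff 0 : ℤ) : ZMod 2) = 0 := by
      have h := h2
      rw [aeval_def, eval₂_at_zero] at h
      exact_mod_cast h
    have h2dvd : (2 : ℤ) ∣ p.coeff 0 := by
      exact_mod_cast (ZMod.intCast_zmod_eq_zero_iff_dvd _ 2).mp hcoeff
    have hpc : p.coeff 0 = -(g.coeff 0) := by
      rw [hg, mul_coeff_zero]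
      simp
    have h2g : (2 : ℤ) ∣ g.coeff 0 := by
      rw [hpc] at h2dvd
      exact (dvd_neg).mp h2dvd
    obtain ⟨m, hm⟩ := h2g
    rw [Ideal.mem_span_pair]
    refine ⟨C m, g.divX, ?_⟩
    have hX : X * g.divX + C (g.coeff 0) = g := X_mul_divX_add g
    have hC2 : (C (2 : ℤ) : Polynomial ℤ) = 2 := by norm_num
    rw [hg]
    conv_rhs => rw [← hX, hm, C_mul, hC2]
    ring
  · rw [Ideal.span_le]
    rintro q hq
    simp only [Set.mem_insert_iff, Set.mem_singleton_iff] at hq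
    rcases hq with rfl | rfl
    · show φ _ = 0
      apply φ_eq_zero
      · simp only [map_mul, map_sub, map_ofNat, aeval_X, map_one]
        norm_num
      · simp only [map_mul, map_sub, map_ofNat, aeval_X, map_one]
        decide
    · show φ _ = 0
      apply φ_eq_zero
      · simp only [map_mul, map_sub, map_ofNat, aeval_X, map_one]
        norm_num
      · simp only [map_mul, map_sub, map_ofNat, aeval_X, map_one]
        decide

lemma surj_aux : ∀ a ∈ Zhalf,
    ∃ p : Polynomial ℤ, aeval (1 / 2 : ℚ) p = a ∧ aeval (0 : ZMod 2) p = 0 := by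
  intro a ha
  induction ha using Subring.closure_induction with
  | mem x hx =>
    rcases hx with rfl
    exact ⟨X, by simp, by simp⟩
  | zero => exact ⟨0, by simp, by simp⟩
  | one =>
    refine ⟨2 * X, ?_, ?_⟩ <;> simp only [map_mul, map_ofNat, aeval_X]
    · norm_num
    · decide
  | add x y hx hy ihx ihy =>
    obtain ⟨p, hp1, hp2⟩ := ihx
    obtain ⟨q, hq1, hq2⟩ := ihy
    exact ⟨p + q, by rw [map_add, hp1, hq1], by rw [map_add, hp2, hq2, add_zero]⟩
  | neg x hx ihx =>
    obtain ⟨p, hp1, hp2⟩ := ihx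
    exact ⟨-p, by rw [map_neg, hp1], by rw [map_neg, hp2, neg_zero]⟩
  | mul x y hx hy ihx ihy =>
    obtain ⟨p, hp1, hp2⟩ := ihx
    obtain ⟨q, hq1, hq2⟩ := ihy
    exact ⟨p * q, by rw [map_mul, hp1, hq1], by rw [map_mul, hp2, hq2, mul_zero]⟩

theorem φ_surjective : Function.Surjective φ := by
  rintro ⟨⟨a, ha⟩, b⟩
  obtain ⟨p, hp1, hp2⟩ := surj_aux a ha
  have hb : b = 0 ∨ b = 1 := by revert b; decide
  rcases hb with rfl | rfl
  · exact ⟨p, φ_eq ha hp1 hp2⟩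
  · refine ⟨p + (1 - 2 * X), φ_eq ha ?_ ?_⟩
    · rw [map_add, hp1]
      simp only [map_sub, map_mul, map_one, map_ofNat, aeval_X]
      norm_num
    · rw [map_add, hp2]
      simp only [map_sub, map_mul, map_one, map_ofNat, aeval_X]
      decide

end StmtAux

/-- The quotient of `ℤ[x]` by the ideal generated by `2(2x-1)` and `x(2x-1)` is
isomorphic as a unital ring to `ℤ[1/2] × ℤ/2ℤ`. -/
theorem stmt_16 :
    Nonempty
      ((Polynomial ℤ ⧸ (Ideal.span {2 * (2 * X - 1), X * (2 * X - 1)} : Ideal (Polynomial ℤ))) ≃+*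
        (↥(Subring.closure {(1 / 2 : ℚ)}) × ZMod 2)) := by
  exact ⟨(Ideal.quotEquivOfEq ker_φ.symm).trans
    (RingHom.quotientKerEquivOfSurjective φ_surjective)⟩
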